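/- There is a constant C such that for every base β ≥ 2 and every p ≥ 1 there exists a halting BNL-program of size at most C·(p·β² + p²) and computation time 2 that simulates the comparison function cmp : Z(p,β)² → Z(1,β), where cmp(x,y) = +1 if the integer denoted by x is strictly greater than the integer denoted by y, and cmp(x,y) = +0 otherwise. -/

import Mathlib

/-! ### Boolean network logic (BNL) -/

/-- Formulas of Boolean network logic (BNL), over schema variables indexed by `ℕ`. -/
inductive BForm where
  | tru : BForm
  | var : ℕ → BForm
  | not : BForm → BForm
  | and : BForm → BForm → BForm

namespace BForm

/-- Truth value of a BNL-formula under a valuation of the schema variables. -/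
def eval (g : ℕ → Bool) : BForm → Bool
  | tru => true
  | var x => g x
  | not φ => !(eval g φ)
  | and φ ψ => eval g φ && eval g ψ

/-- Number of occurrences of `⊤`, variables, `¬` and `∧`. -/
def size : BForm → ℕ
  | tru => 1
  | var _ => 1
  | not φ => size φ + 1
  | and φ ψ => size φ + size ψ + 1

/-- Connective-nesting depth. -/
def depth : BForm → ℕ
  | tru => 0
  | var _ => 0
  | not φ => depth φ + 1
  | and φ ψ => max (depth φ) (depth ψ) + 1

/-- The set of schema variables occurring in a formula. -/
def vars : BForm → Finset ℕ
  | tru => ∅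
  | var x => {x}
  | not φ => vars φ
  | and φ ψ => vars φ ∪ vars ψ

end BForm

/-- A BNL-program over the finite set `T` of schema variables (linearly ordered as natural
numbers), with input predicates `I`, terminal values `term` (relevant on `T \ I`), iteration
clause bodies `iter` (relevant on `T`), print predicates `Pr` and attention predicates `At`. -/
structure BNL where
  T : Finset ℕ
  I : Finset ℕ
  hIT : I ⊆ T
  term : ℕ → Bool
  iter : ℕ → BForm
  hiter : ∀ X ∈ T, (iter X).vars ⊆ T
  Pr : Finset ℕ
  hPr : Pr ⊆ T
  At : Finset ℕ
  hAt : At ⊆ T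

/-- The valuation of the elements of a finite set `I ⊆ ℕ` induced by the bit string `u`,
via the increasing enumeration of `I`. -/
def inputVal (I : Finset ℕ) (u : ℕ → Bool) (X : ℕ) : Bool :=
  u ((I.sort (· ≤ ·)).idxOf X)

namespace BNL

/-- The global configuration of a BNL-program at round `t` on input bit string `u`. -/
def conf (Λ : BNL) (u : ℕ → Bool) : ℕ → ℕ → Bool
  | 0 => fun X => if X ∈ Λ.I then inputVal Λ.I u X else Λ.term X
  | t + 1 => fun X => (Λ.iter X).eval (Λ.conf u t)

/-- The global configuration string at round `t`: the values on `T` in increasing order. -/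
def confStr (Λ : BNL) (u : ℕ → Bool) (t : ℕ) : List Bool :=
  (Λ.T.sort (· ≤ ·)).map (Λ.conf u t)

/-- Round `t` is an output round iff some attention predicate is true at round `t`. -/
def attn (Λ : BNL) (u : ℕ → Bool) (t : ℕ) : Prop :=
  ∃ X ∈ Λ.At, Λ.conf u t X = true

/-- The print string at round `t`: the values of the print predicates in increasing order. -/
def out (Λ : BNL) (u : ℕ → Bool) (t : ℕ) : List Bool :=
  (Λ.Pr.sort (· ≤ ·)).map (Λ.conf u t)

/-- The size of a BNL-program: the total number of occurrences of `⊤`, variables, `¬`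
and `∧` in its terminal and iteration clauses. -/
def size (Λ : BNL) : ℕ :=
  (Λ.T \ Λ.I).card + ∑ X ∈ Λ.T, (Λ.iter X).size

/-- The depth of a BNL-program: the maximum depth of the bodies of its iteration clauses. -/
def depth (Λ : BNL) : ℕ :=
  Λ.T.sup fun X => (Λ.iter X).depth

/-- Pointwise transient time: the least `t` such that `g_t = g_{t+c}` on `T` for some `c ≥ 1`. -/
noncomputable def transientAt (Λ : BNL) (u : ℕ → Bool) : ℕ :=
  sInf {t | ∃ c, 1 ≤ c ∧ ∀ X ∈ Λ.T, Λ.conf u (t + c) X = Λ.conf u t X}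

/-- The transient time of a program: the maximum of its pointwise transient times. -/
def HasTransientTime (Λ : BNL) (n : ℕ) : Prop :=
  (∀ u, Λ.transientAt u ≤ n) ∧ ∃ u, Λ.transientAt u = n

end BNL

/-- An abstract machine producing, for each input bit string, a global configuration string,
an attention condition, and a print string at every round. -/
structure Machine where
  ins : ℕ
  prints : ℕ
  conf : (ℕ → Bool) → ℕ → List Bool
  attn : (ℕ → Bool) → ℕ → Prop
  out : (ℕ → Bool) → ℕ → List Bool

/-- The output rounds of a machine on a given input, as an ordered subtype of `ℕ`. -/
abbrev Machine.Rounds (M : Machine) (u : ℕ → Bool) := {t : ℕ // M.attn u t}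

/-- The machine determined by a BNL-program. -/
def BNL.toM (Λ : BNL) : Machine :=
  ⟨Λ.I.card, Λ.Pr.card, Λ.confStr, Λ.attn, Λ.out⟩

/-- Asynchronous equivalence: equally many input and print positions and, on every input,
an order isomorphism between the output rounds under which the outputs agree. -/
def AsyncEquiv (M₁ M₂ : Machine) : Prop :=
  M₁.ins = M₂.ins ∧ M₁.prints = M₂.prints ∧
  ∀ u : ℕ → Bool, ∃ e : M₁.Rounds u ≃o M₂.Rounds u,
    ∀ t : M₁.Rounds u, M₁.out u t.val = M₂.out u (e t).val

/-- Global equivalence: asynchronous equivalence together with identical global configuration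
sequences and identical output rounds on every input. -/
def GlobalEquiv (M₁ M₂ : Machine) : Prop :=
  AsyncEquiv M₁ M₂ ∧ ∀ u t, M₁.conf u t = M₂.conf u t ∧ (M₁.attn u t ↔ M₂.attn u t)

/-- `M₁` is asynchronously equivalent to `M₂` with computation delay at most `D`:
matched output rounds `x` of `M₁` and `y` of `M₂` satisfy `y ≤ x` and `x ≤ D·y`. -/
def EquivWithDelay (M₁ M₂ : Machine) (D : ℕ) : Prop :=
  M₁.ins = M₂.ins ∧ M₁.prints = M₂.prints ∧
  ∀ u : ℕ → Bool, ∃ e : M₁.Rounds u ≃o M₂.Rounds u,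
    (∀ t : M₁.Rounds u, M₁.out u t.val = M₂.out u (e t).val) ∧
    ∀ t : M₁.Rounds u, (e t).val ≤ t.val ∧ t.val ≤ D * (e t).val

/-! ### Halting programs and one-hot integer arithmetic -/

namespace BNL

/-- The configuration at round `t` is a fixed point. -/
def IsFixedAt (Λ : BNL) (u : ℕ → Bool) (t : ℕ) : Prop :=
  ∀ X ∈ Λ.T, Λ.conf u (t + 1) X = Λ.conf u t X

/-- A halting BNL-program: on every input a fixed point is reached, and the output rounds
are exactly the rounds at which the configuration is a fixed point. -/
def Halting (Λ : BNL) : Prop :=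
  ∀ u, (∃ t, Λ.IsFixedAt u t) ∧ ∀ t, (Λ.attn u t ↔ Λ.IsFixedAt u t)

/-- The least round at which the configuration is a fixed point. -/
noncomputable def haltTime (Λ : BNL) (u : ℕ → Bool) : ℕ :=
  sInf {t | Λ.IsFixedAt u t}

/-- The output of a halting program on input `u`: the print string at the fixed point. -/
noncomputable def output (Λ : BNL) (u : ℕ → Bool) : List Bool :=
  Λ.out u (Λ.haltTime u)

/-- The computation time of a halting program is at most `n`. -/
def CompTimeLE (Λ : BNL) (n : ℕ) : Prop := ∀ u, Λ.haltTime u ≤ n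

/-- The computation time of a halting program is exactly `n` (maximum over all inputs). -/
def HasCompTime (Λ : BNL) (n : ℕ) : Prop :=
  (∀ u, Λ.haltTime u ≤ n) ∧ ∃ u, Λ.haltTime u = n

end BNL

/-- One-hot encoding of the digit `b` as a block of `β` bits. -/
def digitOneHot (β b : ℕ) : List Bool := List.ofFn fun j : Fin β => decide (j.val = b)

/-- One-hot representation of a signed `p`-digit base-`β` integer: a sign bit followed by
one block per digit, most significant digit first. -/
def intOneHot (β p : ℕ) (s : Bool) (b : Fin p → ℕ) : List Bool :=
  s :: (List.ofFn fun i : Fin p => digitOneHot β (b i)).flatten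

/-- The integer `±b₁⋯b_p` in base `β` (most significant digit first; `s = true` means `+`). -/
def intVal (β p : ℕ) (s : Bool) (b : Fin p → ℕ) : ℤ :=
  (cond s 1 (-1)) * ∑ i : Fin p, (b i : ℤ) * (β : ℤ) ^ (p - 1 - i.val)

/-- The most-significant-first base-`β` digit sequence of length `len` of `n`. -/
def natDigits (β len n : ℕ) (i : Fin len) : ℕ := n / β ^ (len - 1 - i.val) % β

/-- `u` agrees with the bit string `w` on the positions of `w`. -/
def Agrees (u : ℕ → Bool) (w : List Bool) : Prop :=
  ∀ j, j < w.length → u j = w.getD j false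

namespace BNLcmp
open BForm

/-! ### Generic formula combinators -/

def bOr (φ ψ : BForm) : BForm := .not (.and (.not φ) (.not ψ))
def bigOr (l : List BForm) : BForm := l.foldr bOr (.not .tru)
def bigAnd (l : List BForm) : BForm := l.foldr .and .tru

lemma eval_bOr (g : ℕ → Bool) (φ ψ : BForm) : (bOr φ ψ).eval g = (φ.eval g || ψ.eval g) := by
  simp [bOr, eval]

lemma eval_bigOr (g : ℕ → Bool) (l : List BForm) :
    (bigOr l).eval g = l.any (fun φ => φ.eval g) := by
  induction l with
  | nil => simp [bigOr, eval]
  | cons a t ih =>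
      show (bOr a (bigOr t)).eval g = _
      rw [eval_bOr, ih]; simp

lemma eval_bigAnd (g : ℕ → Bool) (l : List BForm) :
    (bigAnd l).eval g = l.all (fun φ => φ.eval g) := by
  induction l with
  | nil => simp [bigAnd, eval]
  | cons a t ih =>
      show (BForm.and a (bigAnd t)).eval g = _
      rw [eval, ih]; simp

lemma eval_congr {g g' : ℕ → Bool} (φ : BForm) (h : ∀ x ∈ φ.vars, g x = g' x) :
    φ.eval g = φ.eval g' := by
  induction φ with
  | tru => rfl
  | var x => exact h x (by simp [vars])
  | not φ ih => rw [eval, eval, ih (fun x hx => h x (by simpa [vars] using hx))]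
  | and φ ψ ihφ ihψ =>
      rw [eval, eval, ihφ (fun x hx => h x (by simp [vars]; exact Or.inl hx)),
        ihψ (fun x hx => h x (by simp [vars]; exact Or.inr hx))]

lemma size_bOr (φ ψ : BForm) : (bOr φ ψ).size = φ.size + ψ.size + 4 := by
  simp [bOr, size]; omega

lemma size_bigOr_le (l : List BForm) (c : ℕ) (h : ∀ φ ∈ l, φ.size ≤ c) :
    (bigOr l).size ≤ (c + 4) * l.length + 2 := by
  induction l with
  | nil => simp [bigOr, size]
  | cons a t ih =>
      have : (bigOr (a :: t)).size = a.size + (bigOr t).size + 4 := size_bOr a (bigOr t)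
      have h1 : a.size ≤ c := h a (by simp)
      have h2 := ih (fun φ hφ => h φ (by simp [hφ]))
      simp only [List.length_cons]
      have : (c+4) * (t.length + 1) = (c+4) * t.length + (c+4) := by ring
      omega

lemma size_bigAnd_le (l : List BForm) (c : ℕ) (h : ∀ φ ∈ l, φ.size ≤ c) :
    (bigAnd l).size ≤ (c + 1) * l.length + 1 := by
  induction l with
  | nil => simp [bigAnd, size]
  | cons a t ih =>
      have he : (bigAnd (a :: t)).size = a.size + (bigAnd t).size + 1 := rfl
      have h1 : a.size ≤ c := h a (by simp)
      have h2 := ih (fun φ hφ => h φ (by simp [hφ]))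
      simp only [List.length_cons]
      have : (c+1) * (t.length + 1) = (c+1) * t.length + (c+1) := by ring
      omega

lemma vars_bigOr_subset (l : List BForm) (S : Finset ℕ) (h : ∀ φ ∈ l, φ.vars ⊆ S) :
    (bigOr l).vars ⊆ S := by
  induction l with
  | nil => simp [bigOr, vars]
  | cons a t ih =>
      have : (bigOr (a :: t)).vars = a.vars ∪ (bigOr t).vars := rfl
      rw [this]
      exact Finset.union_subset (h a (by simp)) (ih (fun φ hφ => h φ (by simp [hφ])))

lemma vars_bigAnd_subset (l : List BForm) (S : Finset ℕ) (h : ∀ φ ∈ l, φ.vars ⊆ S) :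
    (bigAnd l).vars ⊆ S := by
  induction l with
  | nil => simp [bigAnd, vars]
  | cons a t ih =>
      have : (bigAnd (a :: t)).vars = a.vars ∪ (bigAnd t).vars := rfl
      rw [this]
      exact Finset.union_subset (h a (by simp)) (ih (fun φ hφ => h φ (by simp [hφ])))

end BNLcmp
namespace BNLcmp

/-! ### Base-β magnitude arithmetic -/

def mag (β p : ℕ) (b : ℕ → ℕ) : ℕ := ∑ j ∈ Finset.range p, b j * β ^ (p - 1 - j)

lemma geom_aux (β : ℕ) (hβ : 1 ≤ β) (n : ℕ) :
    ∑ k ∈ Finset.range n, (β - 1) * β ^ k = β ^ n - 1 := by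
  induction n with
  | zero => simp
  | succ n ih =>
      rw [Finset.sum_range_succ, ih]
      have h1 : 1 ≤ β ^ n := Nat.one_le_pow _ _ (by omega)
      have h2 : (β - 1) * β ^ n = β * β ^ n - 1 * β ^ n := Nat.sub_mul β 1 (β ^ n)
      have h3 : β ^ (n + 1) = β * β ^ n := by rw [pow_succ]; ring
      have h4 : β ^ n ≤ β * β ^ n := Nat.le_mul_of_pos_left _ (by omega)
      omega

lemma tail_lt (β p i : ℕ) (hβ : 2 ≤ β) (a : ℕ → ℕ) (ha : ∀ j, j < p → a j < β)
    (hip : i < p) :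
    ∑ j ∈ Finset.Ico (i + 1) p, a j * β ^ (p - 1 - j) < β ^ (p - 1 - i) := by
  have step1 : ∑ j ∈ Finset.Ico (i + 1) p, a j * β ^ (p - 1 - j)
      ≤ ∑ j ∈ Finset.Ico (i + 1) p, (β - 1) * β ^ (p - 1 - j) := by
    apply Finset.sum_le_sum
    intro j hj
    have hjp : j < p := (Finset.mem_Ico.1 hj).2
    exact Nat.mul_le_mul_right _ (by have := ha j hjp; omega)
  have step2 : ∑ j ∈ Finset.Ico (i + 1) p, (β - 1) * β ^ (p - 1 - j)
      = ∑ k ∈ Finset.range (p - 1 - i), (β - 1) * β ^ ((p - 1 - i) - 1 - k) := by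
    rw [Finset.sum_Ico_eq_sum_range]
    have hn : p - (i + 1) = p - 1 - i := by omega
    rw [hn]
    apply Finset.sum_congr rfl
    intro k hk
    rw [show p - 1 - (i + 1 + k) = (p - 1 - i) - 1 - k from by omega]
  have step3 : ∑ k ∈ Finset.range (p - 1 - i), (β - 1) * β ^ ((p - 1 - i) - 1 - k)
      = ∑ k ∈ Finset.range (p - 1 - i), (β - 1) * β ^ k :=
    Finset.sum_range_reflect (fun k => (β - 1) * β ^ k) _
  have step4 := geom_aux β (by omega) (p - 1 - i)
  have h5 : β ^ (p - 1 - i) - 1 < β ^ (p - 1 - i) := by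
    have : 1 ≤ β ^ (p - 1 - i) := Nat.one_le_pow _ _ (by omega)
    omega
  omega

lemma mag_lt_of_lex (β p : ℕ) (hβ : 2 ≤ β) (a b : ℕ → ℕ) (ha : ∀ j, j < p → a j < β)
    (i : ℕ) (hip : i < p) (hpre : ∀ j, j < i → a j = b j) (hab : a i < b i) :
    mag β p a < mag β p b := by
  unfold mag
  have hi1 : i + 1 ≤ p := hip
  have split : ∀ c : ℕ → ℕ, ∑ j ∈ Finset.range p, c j * β ^ (p - 1 - j)
      = (∑ j ∈ Finset.Ico 0 i, c j * β ^ (p - 1 - j)) + c i * β ^ (p - 1 - i)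
        + ∑ j ∈ Finset.Ico (i + 1) p, c j * β ^ (p - 1 - j) := by
    intro c
    rw [Finset.range_eq_Ico,
      ← Finset.sum_Ico_consecutive (fun j => c j * β ^ (p - 1 - j)) (Nat.zero_le i) hip.le,
      ← Finset.sum_Ico_consecutive (fun j => c j * β ^ (p - 1 - j)) (Nat.le_succ i) hi1,
      Nat.Ico_succ_singleton, Finset.sum_singleton]
    ring
  rw [split a, split b]
  have hpre' : ∑ j ∈ Finset.Ico 0 i, a j * β ^ (p - 1 - j)
      = ∑ j ∈ Finset.Ico 0 i, b j * β ^ (p - 1 - j) := by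
    apply Finset.sum_congr rfl
    intro j hj
    rw [hpre j (Finset.mem_Ico.1 hj).2]
  have htail := tail_lt β p i hβ a ha hip
  have hmid : a i * β ^ (p - 1 - i) + β ^ (p - 1 - i) ≤ b i * β ^ (p - 1 - i) := by
    have : (a i + 1) * β ^ (p - 1 - i) ≤ b i * β ^ (p - 1 - i) :=
      Nat.mul_le_mul_right _ (by omega)
    have he : (a i + 1) * β ^ (p - 1 - i) = a i * β ^ (p - 1 - i) + β ^ (p - 1 - i) := by ring
    omega
  have hbtail : 0 ≤ ∑ j ∈ Finset.Ico (i + 1) p, b j * β ^ (p - 1 - j) := Nat.zero_le _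
  omega

lemma mag_lt_iff (β p : ℕ) (hβ : 2 ≤ β) (a b : ℕ → ℕ) (ha : ∀ j, j < p → a j < β)
    (hb : ∀ j, j < p → b j < β) :
    mag β p a < mag β p b ↔ ∃ i, i < p ∧ a i < b i ∧ ∀ j, j < i → a j = b j := by
  constructor
  · intro h
    by_contra hno
    push_neg at hno
    by_cases hall : ∀ j, j < p → a j = b j
    · have : mag β p a = mag β p b := by
        unfold mag
        exact Finset.sum_congr rfl fun j hj => by rw [hall j (Finset.mem_range.1 hj)]
      omega
    · push_neg at hall
      obtain ⟨j0, hj0p, hj0⟩ := hall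
      have hex : ∃ j, j < p ∧ a j ≠ b j := ⟨j0, hj0p, hj0⟩
      classical
      obtain ⟨hip, hine⟩ := Nat.find_spec hex
      set i := Nat.find hex with hidef
      have hpre : ∀ j, j < i → a j = b j := by
        intro j hj
        by_contra hc
        exact Nat.find_min hex hj ⟨hj.trans hip, hc⟩
      rcases Nat.lt_or_ge (a i) (b i) with hlt | hge
      · obtain ⟨j, hj, hne⟩ := hno i hip hlt
        exact hne (hpre j hj)
      · have hlt' : b i < a i := by omega
        have := mag_lt_of_lex β p hβ b a hb i hip (fun j hj => (hpre j hj).symm) hlt'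
        omega
  · rintro ⟨i, hip, hab, hpre⟩
    exact mag_lt_of_lex β p hβ a b ha i hip hpre hab

lemma mag_eq_zero_iff (β p : ℕ) (hβ : 1 ≤ β) (b : ℕ → ℕ) :
    mag β p b = 0 ↔ ∀ j, j < p → b j = 0 := by
  unfold mag
  rw [Finset.sum_eq_zero_iff]
  constructor
  · intro h j hj
    have := h j (Finset.mem_range.2 hj)
    have hpow : 0 < β ^ (p - 1 - j) := Nat.pow_pos (by omega)
    rcases Nat.mul_eq_zero.1 this with h' | h'
    · exact h'
    · omega
  · intro h j hj
    rw [h j (Finset.mem_range.1 hj), zero_mul]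

def extD (p : ℕ) (b : Fin p → ℕ) (j : ℕ) : ℕ := if h : j < p then b ⟨j, h⟩ else 0

lemma intVal_eq (β p : ℕ) (s : Bool) (b : Fin p → ℕ) :
    intVal β p s b = (cond s 1 (-1)) * (mag β p (extD p b) : ℤ) := by
  unfold intVal mag
  congr 1
  push_cast
  rw [← Fin.sum_univ_eq_sum_range (fun j => ((extD p b j : ℤ) * (β : ℤ) ^ (p - 1 - j))) p]
  apply Finset.sum_congr rfl
  intro i _
  simp [extD, i.isLt]

end BNLcmp
namespace BNLcmp

/-! ### One-hot representation facts -/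

lemma length_digitOneHot (β b : ℕ) : (digitOneHot β b).length = β := by
  simp [digitOneHot]

lemma getD_digitOneHot (β b d : ℕ) (hd : d < β) :
    (digitOneHot β b).getD d false = decide (d = b) := by
  rw [List.getD_eq_getElem _ _ (by simp [length_digitOneHot, hd])]
  simp [digitOneHot]

lemma length_flatten_oneHot (β p : ℕ) (b : Fin p → ℕ) :
    (List.ofFn fun i : Fin p => digitOneHot β (b i)).flatten.length = p * β := by
  rw [List.length_flatten]
  have : (List.map List.length (List.ofFn fun i : Fin p => digitOneHot β (b i)))
      = List.ofFn (fun _ : Fin p => β) := by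
    rw [List.map_ofFn]
    congr 1
    funext i
    simp [Function.comp, length_digitOneHot]
  rw [this, List.sum_ofFn]
  simp [Finset.sum_const, mul_comm]

lemma length_intOneHot (β p : ℕ) (s : Bool) (b : Fin p → ℕ) :
    (intOneHot β p s b).length = 1 + p * β := by
  show ((List.ofFn fun i : Fin p => digitOneHot β (b i)).flatten.length) + 1 = 1 + p * β
  rw [length_flatten_oneHot]
  omega

lemma flatten_getD (β : ℕ) : ∀ (p : ℕ) (b : Fin p → ℕ) (i : Fin p) (d : ℕ), d < β →
    ((List.ofFn fun i : Fin p => digitOneHot β (b i)).flatten).getD (i.val * β + d) false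
      = decide (d = b i) := by
  intro p
  induction p with
  | zero => exact fun b i => absurd i.isLt (by omega)
  | succ n ih =>
      intro b i d hd
      rw [List.ofFn_succ, List.flatten_cons]
      rcases Fin.eq_zero_or_eq_succ i with h0 | ⟨j, hj⟩
      · subst h0
        simp only [Fin.val_zero, zero_mul, zero_add]
        rw [List.getD_append _ _ _ _ (by simp [length_digitOneHot, hd])]
        exact getD_digitOneHot β _ d hd
      · subst hj
        have hlen : (digitOneHot β (b 0)).length = β := length_digitOneHot _ _
        have hval : (j.succ.val) * β + d = β + (j.val * β + d) := by
          have : (j.val + 1) * β = j.val * β + β := by ring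
          simp [Fin.val_succ, this]; omega
        rw [hval, List.getD_append_right _ _ _ _ (by omega)]
        rw [hlen, show β + (j.val * β + d) - β = j.val * β + d from by omega]
        exact ih (fun k => b k.succ) j d hd

lemma getD_intOneHot_sign (β p : ℕ) (s : Bool) (b : Fin p → ℕ) :
    (intOneHot β p s b).getD 0 false = s := rfl

lemma getD_intOneHot_digit (β p : ℕ) (s : Bool) (b : Fin p → ℕ) (i : Fin p) (d : ℕ)
    (hd : d < β) :
    (intOneHot β p s b).getD (1 + i.val * β + d) false = decide (d = b i) := by
  show (s :: _).getD (1 + i.val * β + d) false = _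
  rw [show 1 + i.val * β + d = (i.val * β + d) + 1 from by omega]
  rw [List.getD_cons_succ]
  exact flatten_getD β p b i d hd

end BNLcmp
namespace BNLcmp
open BForm

/-! ### The comparison program -/

def nn (β p : ℕ) : ℕ := 1 + p * β
def NN (β p : ℕ) : ℕ := 2 * nn β p
def xdI (β p i d : ℕ) : ℕ := 1 + i * β + d
def ydI (β p i d : ℕ) : ℕ := nn β p + (1 + i * β + d)
def eVI (β p i : ℕ) : ℕ := NN β p + i
def gVI (β p i : ℕ) : ℕ := NN β p + p + i
def lVI (β p i : ℕ) : ℕ := NN β p + 2 * p + i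
def c1I (β p : ℕ) : ℕ := NN β p + 3 * p
def c2I (β p : ℕ) : ℕ := NN β p + 3 * p + 1
def o0I (β p : ℕ) : ℕ := NN β p + 3 * p + 2
def MM (β p : ℕ) : ℕ := o0I β p + 1 + β

lemma xdI_lt (β p i d : ℕ) (hi : i < p) (hd : d < β) : xdI β p i d < nn β p := by
  unfold xdI nn
  have h1 : (i + 1) * β ≤ p * β := Nat.mul_le_mul_right _ hi
  have h2 : (i + 1) * β = i * β + β := by ring
  omega

lemma ydI_lt (β p i d : ℕ) (hi : i < p) (hd : d < β) : ydI β p i d < NN β p := by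
  have := xdI_lt β p i d hi hd
  unfold ydI NN
  unfold xdI at this
  omega

lemma xdI_lt' (β p i d : ℕ) (hi : i < p) (hd : d < β) : xdI β p i d < NN β p := by
  have := xdI_lt β p i d hi hd
  unfold NN
  omega

def eForm (β p i : ℕ) : BForm :=
  bigOr ((List.range β).map fun d => .and (.var (xdI β p i d)) (.var (ydI β p i d)))

def gtPairs (β : ℕ) : List (ℕ × ℕ) :=
  (List.range β).flatMap fun d => (List.range d).map fun d' => (d, d')

lemma mem_gtPairs (β : ℕ) (q : ℕ × ℕ) :
    q ∈ gtPairs β ↔ q.1 < β ∧ q.2 < q.1 := by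
  unfold gtPairs
  simp only [List.mem_flatMap, List.mem_map, List.mem_range]
  constructor
  · rintro ⟨d, hd, d', hd', rfl⟩
    exact ⟨hd, hd'⟩
  · rintro ⟨h1, h2⟩
    exact ⟨q.1, h1, q.2, h2, rfl⟩

lemma length_gtPairs_le (β : ℕ) : (gtPairs β).length ≤ β * β := by
  unfold gtPairs
  rw [List.length_flatMap]
  have h : ∀ x ∈ (List.map (List.length ∘ fun d => (List.range d).map fun d' => (d, d'))
      (List.range β)), x ≤ β := by
    intro x hx
    simp only [List.mem_map, List.mem_range, Function.comp] at hx
    obtain ⟨d, hd, rfl⟩ := hx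
    simp [le_of_lt hd]
  calc (List.map (List.length ∘ fun d => (List.range d).map fun d' => (d, d'))
      (List.range β)).sum ≤ _ * β := List.sum_le_card_nsmul _ β h
    _ = β * β := by simp [mul_comm]

def gForm (β p i : ℕ) : BForm :=
  bigOr ((gtPairs β).map fun q => .and (.var (xdI β p i q.1)) (.var (ydI β p i q.2)))

def lForm (β p i : ℕ) : BForm :=
  bigOr ((gtPairs β).map fun q => .and (.var (ydI β p i q.1)) (.var (xdI β p i q.2)))

def zForm (β p : ℕ) : BForm :=
  bigAnd ((List.range p).map fun i => .and (.var (xdI β p i 0)) (.var (ydI β p i 0)))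

def mgForm (β p : ℕ) : BForm :=
  bigOr ((List.range p).map fun i =>
    .and (.var (gVI β p i)) (bigAnd ((List.range i).map fun j => .var (eVI β p j))))

def mlForm (β p : ℕ) : BForm :=
  bigOr ((List.range p).map fun i =>
    .and (.var (lVI β p i)) (bigAnd ((List.range i).map fun j => .var (eVI β p j))))

def rForm (β p : ℕ) : BForm :=
  bigOr
    [ .and (.var 0) (.and (.var (nn β p)) (mgForm β p)),
      .and (.var 0) (.and (.not (.var (nn β p))) (.not (zForm β p))),
      .and (.not (.var 0)) (.and (.not (.var (nn β p))) (mlForm β p)) ]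

def iterF (β p X : ℕ) : BForm :=
  if X < NN β p then .var X
  else if X < NN β p + p then eForm β p (X - NN β p)
  else if X < NN β p + 2 * p then gForm β p (X - (NN β p + p))
  else if X < NN β p + 3 * p then lForm β p (X - (NN β p + 2 * p))
  else if X = c1I β p then .tru
  else if X = c2I β p then .var (c1I β p)
  else if X = o0I β p then .tru
  else if X = o0I β p + 1 then .not (rForm β p)
  else if X = o0I β p + 2 then rForm β p
  else .not .tru

/-! Resolving `iterF` on each region. -/

lemma iterF_input (β p X : ℕ) (h : X < NN β p) : iterF β p X = .var X := by
  unfold iterF; rw [if_pos h]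

lemma iterF_e (β p i : ℕ) (h : i < p) : iterF β p (eVI β p i) = eForm β p i := by
  unfold iterF eVI
  rw [if_neg (by omega), if_pos (by omega)]
  congr 1
  omega

lemma iterF_g (β p i : ℕ) (h : i < p) : iterF β p (gVI β p i) = gForm β p i := by
  unfold iterF gVI
  rw [if_neg (by omega), if_neg (by omega), if_pos (by omega)]
  congr 1
  omega

lemma iterF_l (β p i : ℕ) (h : i < p) : iterF β p (lVI β p i) = lForm β p i := by
  unfold iterF lVI
  rw [if_neg (by omega), if_neg (by omega), if_neg (by omega), if_pos (by omega)]
  congr 1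
  omega

lemma iterF_c1 (β p : ℕ) : iterF β p (c1I β p) = .tru := by
  unfold iterF c1I
  rw [if_neg (by omega), if_neg (by omega), if_neg (by omega), if_neg (by omega),
    if_pos rfl]

lemma iterF_c2 (β p : ℕ) : iterF β p (c2I β p) = .var (c1I β p) := by
  unfold iterF c2I
  rw [if_neg (by omega), if_neg (by omega), if_neg (by omega), if_neg (by omega),
    if_neg (by unfold c1I; omega), if_pos rfl]

lemma iterF_o0 (β p : ℕ) : iterF β p (o0I β p) = .tru := by
  unfold iterF o0I
  rw [if_neg (by omega), if_neg (by omega), if_neg (by omega), if_neg (by omega),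
    if_neg (by unfold c1I; omega), if_neg (by unfold c2I; omega), if_pos rfl]

lemma iterF_o1 (β p : ℕ) : iterF β p (o0I β p + 1) = .not (rForm β p) := by
  unfold iterF
  rw [if_neg (by unfold o0I; omega), if_neg (by unfold o0I; omega),
    if_neg (by unfold o0I; omega), if_neg (by unfold o0I; omega),
    if_neg (by unfold o0I c1I; omega), if_neg (by unfold o0I c2I; omega),
    if_neg (by omega), if_pos rfl]

lemma iterF_o2 (β p : ℕ) : iterF β p (o0I β p + 2) = rForm β p := by
  unfold iterF
  rw [if_neg (by unfold o0I; omega), if_neg (by unfold o0I; omega),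
    if_neg (by unfold o0I; omega), if_neg (by unfold o0I; omega),
    if_neg (by unfold o0I c1I; omega), if_neg (by unfold o0I c2I; omega),
    if_neg (by omega), if_neg (by omega), if_pos rfl]

lemma iterF_oD (β p d : ℕ) (h2 : 2 < d) : iterF β p (o0I β p + d) = .not .tru := by
  unfold iterF
  rw [if_neg (by unfold o0I; omega), if_neg (by unfold o0I; omega),
    if_neg (by unfold o0I; omega), if_neg (by unfold o0I; omega),
    if_neg (by unfold o0I c1I; omega), if_neg (by unfold o0I c2I; omega),
    if_neg (by omega), if_neg (by omega), if_neg (by omega)]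

end BNLcmp
namespace BNLcmp
open BForm

/-! ### Variable sets of the formulas -/

lemma vars_eForm (β p i : ℕ) (hi : i < p) :
    (eForm β p i).vars ⊆ Finset.range (NN β p) := by
  apply vars_bigOr_subset
  intro φ hφ
  simp only [List.mem_map, List.mem_range] at hφ
  obtain ⟨d, hd, rfl⟩ := hφ
  show ({xdI β p i d} ∪ {ydI β p i d} : Finset ℕ) ⊆ _
  intro x hx
  simp only [Finset.mem_union, Finset.mem_singleton] at hx
  rcases hx with rfl | rfl
  · exact Finset.mem_range.2 (xdI_lt' β p i d hi hd)
  · exact Finset.mem_range.2 (ydI_lt β p i d hi hd)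

lemma vars_gForm (β p i : ℕ) (hi : i < p) :
    (gForm β p i).vars ⊆ Finset.range (NN β p) := by
  apply vars_bigOr_subset
  intro φ hφ
  simp only [List.mem_map] at hφ
  obtain ⟨q, hq, rfl⟩ := hφ
  obtain ⟨h1, h2⟩ := (mem_gtPairs β q).1 hq
  intro x hx
  simp only [vars, Finset.mem_union, Finset.mem_singleton] at hx
  rcases hx with rfl | rfl
  · exact Finset.mem_range.2 (xdI_lt' β p i q.1 hi h1)
  · exact Finset.mem_range.2 (ydI_lt β p i q.2 hi (by omega))

lemma vars_lForm (β p i : ℕ) (hi : i < p) :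
    (lForm β p i).vars ⊆ Finset.range (NN β p) := by
  apply vars_bigOr_subset
  intro φ hφ
  simp only [List.mem_map] at hφ
  obtain ⟨q, hq, rfl⟩ := hφ
  obtain ⟨h1, h2⟩ := (mem_gtPairs β q).1 hq
  intro x hx
  simp only [vars, Finset.mem_union, Finset.mem_singleton] at hx
  rcases hx with rfl | rfl
  · exact Finset.mem_range.2 (ydI_lt β p i q.1 hi h1)
  · exact Finset.mem_range.2 (xdI_lt' β p i q.2 hi (by omega))

lemma vars_zForm (β p : ℕ) (hβ : 1 ≤ β) :
    (zForm β p).vars ⊆ Finset.range (NN β p) := by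
  apply vars_bigAnd_subset
  intro φ hφ
  simp only [List.mem_map, List.mem_range] at hφ
  obtain ⟨i, hi, rfl⟩ := hφ
  intro x hx
  simp only [vars, Finset.mem_union, Finset.mem_singleton] at hx
  rcases hx with rfl | rfl
  · exact Finset.mem_range.2 (xdI_lt' β p i 0 hi hβ)
  · exact Finset.mem_range.2 (ydI_lt β p i 0 hi hβ)

lemma vars_mgForm (β p : ℕ) :
    (mgForm β p).vars ⊆ Finset.range (NN β p + 3 * p) := by
  apply vars_bigOr_subset
  intro φ hφ
  simp only [List.mem_map, List.mem_range] at hφ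
  obtain ⟨i, hi, rfl⟩ := hφ
  intro x hx
  simp only [vars, Finset.mem_union, Finset.mem_singleton] at hx
  rcases hx with rfl | hx
  · exact Finset.mem_range.2 (by unfold gVI; omega)
  · have := vars_bigAnd_subset ((List.range i).map fun j => .var (eVI β p j))
      (Finset.range (NN β p + 3 * p)) ?_ hx
    · exact this
    · intro ψ hψ
      simp only [List.mem_map, List.mem_range] at hψ
      obtain ⟨j, hj, rfl⟩ := hψ
      intro y hy
      simp only [vars, Finset.mem_singleton] at hy
      subst hy
      exact Finset.mem_range.2 (by unfold eVI; omega)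

lemma vars_mlForm (β p : ℕ) :
    (mlForm β p).vars ⊆ Finset.range (NN β p + 3 * p) := by
  apply vars_bigOr_subset
  intro φ hφ
  simp only [List.mem_map, List.mem_range] at hφ
  obtain ⟨i, hi, rfl⟩ := hφ
  intro x hx
  simp only [vars, Finset.mem_union, Finset.mem_singleton] at hx
  rcases hx with rfl | hx
  · exact Finset.mem_range.2 (by unfold lVI; omega)
  · have := vars_bigAnd_subset ((List.range i).map fun j => .var (eVI β p j))
      (Finset.range (NN β p + 3 * p)) ?_ hx
    · exact this
    · intro ψ hψ
      simp only [List.mem_map, List.mem_range] at hψ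
      obtain ⟨j, hj, rfl⟩ := hψ
      intro y hy
      simp only [vars, Finset.mem_singleton] at hy
      subst hy
      exact Finset.mem_range.2 (by unfold eVI; omega)

lemma vars_rForm (β p : ℕ) (hβ : 1 ≤ β) :
    (rForm β p).vars ⊆ Finset.range (NN β p + 3 * p) := by
  have hmono : Finset.range (NN β p) ⊆ Finset.range (NN β p + 3 * p) :=
    Finset.range_subset_range.2 (by omega)
  have h0 : (0 : ℕ) ∈ Finset.range (NN β p + 3 * p) :=
    Finset.mem_range.2 (by unfold NN nn; omega)
  have hn : nn β p ∈ Finset.range (NN β p + 3 * p) :=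
    Finset.mem_range.2 (by unfold NN nn; omega)
  apply vars_bigOr_subset
  intro φ hφ
  simp only [List.mem_cons, List.not_mem_nil, or_false] at hφ
  rcases hφ with rfl | rfl | rfl
  · intro x hx
    simp only [vars, Finset.mem_union, Finset.mem_singleton] at hx
    rcases hx with rfl | rfl | hx
    · exact h0
    · exact hn
    · exact vars_mgForm β p hx
  · intro x hx
    simp only [vars, Finset.mem_union, Finset.mem_singleton] at hx
    rcases hx with rfl | rfl | hx
    · exact h0
    · exact hn
    · exact hmono (vars_zForm β p hβ hx)
  · intro x hx
    simp only [vars, Finset.mem_union, Finset.mem_singleton] at hx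
    rcases hx with rfl | rfl | hx
    · exact h0
    · exact hn
    · exact vars_mlForm β p hx

/-! ### The program -/

def prog (β p : ℕ) (hβ : 2 ≤ β) (hp : 1 ≤ p) : BNL where
  T := Finset.range (MM β p)
  I := Finset.range (NN β p)
  hIT := Finset.range_subset_range.2 (by unfold MM o0I; omega)
  term := fun _ => false
  iter := iterF β p
  hiter := by
    intro X _
    have hmono : Finset.range (NN β p + 3 * p) ⊆ Finset.range (MM β p) :=
      Finset.range_subset_range.2 (by unfold MM o0I; omega)
    have hmono' : Finset.range (NN β p) ⊆ Finset.range (MM β p) :=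
      Finset.range_subset_range.2 (by unfold MM o0I; omega)
    unfold iterF
    split_ifs with h1 h2 h3 h4 h5 h6 h7 h8 h9
    · intro x hx
      simp only [BForm.vars, Finset.mem_singleton] at hx
      subst hx
      exact Finset.mem_range.2 (by unfold MM o0I; omega)
    · exact (vars_eForm β p _ (by omega)).trans hmono'
    · exact (vars_gForm β p _ (by omega)).trans hmono'
    · exact (vars_lForm β p _ (by omega)).trans hmono'
    · simp [BForm.vars]
    · intro x hx
      simp only [BForm.vars, Finset.mem_singleton] at hx
      subst hx
      exact Finset.mem_range.2 (by unfold c1I MM o0I; omega)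
    · simp [BForm.vars]
    · exact (vars_rForm β p (by omega)).trans hmono
    · exact (vars_rForm β p (by omega)).trans hmono
    · simp [BForm.vars]
  Pr := Finset.image (fun d => o0I β p + d) (Finset.range (1 + β))
  hPr := by
    intro x hx
    simp only [Finset.mem_image, Finset.mem_range] at hx
    obtain ⟨d, hd, rfl⟩ := hx
    exact Finset.mem_range.2 (by unfold MM; omega)
  At := {c2I β p}
  hAt := by
    intro x hx
    simp only [Finset.mem_singleton] at hx
    subst hx
    exact Finset.mem_range.2 (by unfold c2I MM o0I; omega)

end BNLcmp
namespace BNLcmp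
open BForm

/-! ### Dynamics of the program -/

lemma indexOf_range {x n : ℕ} (h : x < n) : (List.range n).idxOf x = x := by
  induction n with
  | zero => omega
  | succ n ih =>
      rw [List.range_succ]
      rcases Nat.lt_or_ge x n with h' | h'
      · rw [List.idxOf_append_of_mem (by simp [h'])]
        exact ih h'
      · have hx : x = n := by omega
        subst hx
        rw [List.idxOf_append_of_notMem (by simp), List.length_range]
        simp

variable {β p : ℕ} {hβ : 2 ≤ β} {hp : 1 ≤ p} {u : ℕ → Bool}

lemma conf_succ (t X : ℕ) :
    (prog β p hβ hp).conf u (t + 1) X = (iterF β p X).eval ((prog β p hβ hp).conf u t) := rfl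

lemma conf_input (t : ℕ) {X : ℕ} (h : X < NN β p) :
    (prog β p hβ hp).conf u t X = u X := by
  induction t with
  | zero =>
      show (if X ∈ (prog β p hβ hp).I then inputVal (prog β p hβ hp).I u X
        else (prog β p hβ hp).term X) = u X
      have hI : (prog β p hβ hp).I = Finset.range (NN β p) := rfl
      rw [hI, if_pos (Finset.mem_range.2 h)]
      unfold inputVal
      rw [Finset.sort_range, indexOf_range h]
  | succ t ih =>
      rw [conf_succ, iterF_input β p X h]
      exact ih

lemma vars_iterF_low {X : ℕ} (h : X < NN β p + 3 * p) :
    (iterF β p X).vars ⊆ Finset.range (NN β p) := by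
  unfold iterF
  split_ifs with h1 h2 h3 h4
  · intro x hx
    simp only [vars, Finset.mem_singleton] at hx
    subst hx
    exact Finset.mem_range.2 h1
  · exact vars_eForm β p _ (by omega)
  · exact vars_gForm β p _ (by omega)
  · exact vars_lForm β p _ (by omega)
  all_goals omega

lemma conf_aux {X : ℕ} (hv : (iterF β p X).vars ⊆ Finset.range (NN β p)) (t : ℕ) :
    (prog β p hβ hp).conf u (t + 1) X = (iterF β p X).eval u := by
  rw [conf_succ]
  exact eval_congr _ fun y hy => conf_input t (Finset.mem_range.1 (hv hy))

lemma conf_stable {Y : ℕ} (h : Y < NN β p + 3 * p) (t : ℕ) :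
    (prog β p hβ hp).conf u (t + 1) Y = (prog β p hβ hp).conf u 1 Y := by
  rcases Nat.lt_or_ge Y (NN β p) with h' | h'
  · rw [conf_input (u := u) (t + 1) h', conf_input (u := u) 1 h']
  · rw [conf_aux (vars_iterF_low h) t, show (1 : ℕ) = 0 + 1 from rfl,
      conf_aux (vars_iterF_low h) 0]

lemma conf_c1_succ (t : ℕ) : (prog β p hβ hp).conf u (t + 1) (c1I β p) = true := by
  rw [conf_succ, iterF_c1]
  rfl

lemma conf_notI_0 {X : ℕ} (h : ¬ X < NN β p) : (prog β p hβ hp).conf u 0 X = false := by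
  show (if X ∈ (prog β p hβ hp).I then inputVal (prog β p hβ hp).I u X
    else (prog β p hβ hp).term X) = false
  rw [if_neg (by simpa [prog] using h)]
  rfl

lemma conf_c1_0 : (prog β p hβ hp).conf u 0 (c1I β p) = false :=
  conf_notI_0 (by unfold c1I; omega)

lemma conf_c2_0 : (prog β p hβ hp).conf u 0 (c2I β p) = false :=
  conf_notI_0 (by unfold c2I; omega)

lemma conf_c2_1 : (prog β p hβ hp).conf u 1 (c2I β p) = false := by
  rw [show (1 : ℕ) = 0 + 1 from rfl, conf_succ, iterF_c2]
  exact conf_c1_0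

lemma conf_c2_succ2 (t : ℕ) : (prog β p hβ hp).conf u (t + 2) (c2I β p) = true := by
  rw [show t + 2 = (t + 1) + 1 from rfl, conf_succ, iterF_c2]
  exact conf_c1_succ t

lemma conf_o0_succ (t : ℕ) : (prog β p hβ hp).conf u (t + 1) (o0I β p) = true := by
  rw [conf_succ, iterF_o0]
  rfl

lemma conf_oD_succ (t d : ℕ) (h : 2 < d) :
    (prog β p hβ hp).conf u (t + 1) (o0I β p + d) = false := by
  rw [conf_succ, iterF_oD β p d h]
  rfl

lemma rForm_stable (t : ℕ) :
    (rForm β p).eval ((prog β p hβ hp).conf u (t + 1))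
      = (rForm β p).eval ((prog β p hβ hp).conf u 1) := by
  apply eval_congr
  intro y hy
  exact conf_stable (Finset.mem_range.1 (vars_rForm β p (by omega) hy)) t

lemma conf_o1 (t : ℕ) :
    (prog β p hβ hp).conf u (t + 2) (o0I β p + 1)
      = !((rForm β p).eval ((prog β p hβ hp).conf u 1)) := by
  rw [show t + 2 = (t + 1) + 1 from rfl, conf_succ, iterF_o1]
  have hrfl : ((rForm β p).not).eval ((prog β p hβ hp).conf u (t + 1))
      = !((rForm β p).eval ((prog β p hβ hp).conf u (t + 1))) := rfl
  rw [hrfl, rForm_stable (hβ := hβ) (hp := hp) t]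

lemma conf_o2 (t : ℕ) :
    (prog β p hβ hp).conf u (t + 2) (o0I β p + 2)
      = (rForm β p).eval ((prog β p hβ hp).conf u 1) := by
  rw [show t + 2 = (t + 1) + 1 from rfl, conf_succ, iterF_o2]
  exact rForm_stable (hβ := hβ) (hp := hp) t

lemma fixed2 (t : ℕ) : (prog β p hβ hp).IsFixedAt u (t + 2) := by
  intro X hX
  have hX' : X < MM β p := by simpa [prog] using hX
  rcases Nat.lt_or_ge X (NN β p + 3 * p) with h | h
  · rw [show t + 2 + 1 = (t + 2) + 1 from rfl, conf_stable h (t + 2),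
      show t + 2 = (t + 1) + 1 from rfl, conf_stable h (t + 1)]
  · by_cases e1 : X = c1I β p
    · subst e1
      rw [conf_c1_succ (t + 2), show t + 2 = (t + 1) + 1 from rfl, conf_c1_succ (t + 1)]
    by_cases e2 : X = c2I β p
    · subst e2
      rw [show t + 2 + 1 = (t + 1) + 2 from rfl, conf_c2_succ2 (t + 1), conf_c2_succ2 t]
    by_cases e3 : X = o0I β p
    · subst e3
      rw [conf_o0_succ (t + 2), show t + 2 = (t + 1) + 1 from rfl, conf_o0_succ (t + 1)]
    by_cases e4 : X = o0I β p + 1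
    · subst e4
      rw [show t + 2 + 1 = (t + 1) + 2 from rfl, conf_o1 (t + 1), conf_o1 t]
    by_cases e5 : X = o0I β p + 2
    · subst e5
      rw [show t + 2 + 1 = (t + 1) + 2 from rfl, conf_o2 (t + 1), conf_o2 t]
    · have hd : 2 < X - o0I β p ∧ X = o0I β p + (X - o0I β p) := by
        have h1 : c1I β p = NN β p + 3 * p := rfl
        have h2 : c2I β p = NN β p + 3 * p + 1 := rfl
        have h3 : o0I β p = NN β p + 3 * p + 2 := rfl
        have h4 : MM β p = o0I β p + 1 + β := rfl
        omega
      rw [hd.2, conf_oD_succ (t + 2) _ hd.1, show t + 2 = (t + 1) + 1 from rfl,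
        conf_oD_succ (t + 1) _ hd.1]

lemma c1_mem_T : c1I β p ∈ (prog β p hβ hp).T := by
  show c1I β p ∈ Finset.range (MM β p)
  exact Finset.mem_range.2 (by unfold c1I MM o0I; omega)

lemma c2_mem_T : c2I β p ∈ (prog β p hβ hp).T := by
  show c2I β p ∈ Finset.range (MM β p)
  exact Finset.mem_range.2 (by unfold c2I MM o0I; omega)

lemma notfixed0 : ¬ (prog β p hβ hp).IsFixedAt u 0 := by
  intro h
  have := h (c1I β p) c1_mem_T
  rw [show (0 : ℕ) + 1 = 0 + 1 from rfl, conf_c1_succ 0, conf_c1_0] at this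
  simp at this

lemma notfixed1 : ¬ (prog β p hβ hp).IsFixedAt u 1 := by
  intro h
  have := h (c2I β p) c2_mem_T
  rw [show (1 : ℕ) + 1 = 0 + 2 from rfl, conf_c2_succ2 0, conf_c2_1] at this
  simp at this

lemma fixed_iff (t : ℕ) : (prog β p hβ hp).IsFixedAt u t ↔ 2 ≤ t := by
  constructor
  · intro h
    match t with
    | 0 => exact absurd h notfixed0
    | 1 => exact absurd h notfixed1
    | t + 2 => omega
  · intro h
    match t with
    | t + 2 => exact fixed2 t

lemma attn_iff (t : ℕ) : (prog β p hβ hp).attn u t ↔ 2 ≤ t := by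
  unfold BNL.attn
  constructor
  · rintro ⟨X, hX, hXt⟩
    have : X = c2I β p := by simpa [prog] using hX
    subst this
    match t with
    | 0 => rw [conf_c2_0] at hXt; simp at hXt
    | 1 => rw [conf_c2_1] at hXt; simp at hXt
    | t + 2 => omega
  · intro h
    match t with
    | t + 2 => exact ⟨c2I β p, by simp [prog], conf_c2_succ2 t⟩

lemma prog_halting : (prog β p hβ hp).Halting := by
  intro u
  refine ⟨⟨2, fixed2 0⟩, fun t => ?_⟩
  rw [attn_iff, fixed_iff]

lemma haltTime_eq : (prog β p hβ hp).haltTime u = 2 := by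
  unfold BNL.haltTime
  apply le_antisymm
  · exact Nat.sInf_le (fixed2 0)
  · have hne : {t | (prog β p hβ hp).IsFixedAt u t}.Nonempty := ⟨2, fixed2 0⟩
    have hmem := Nat.sInf_mem hne
    rw [Set.mem_setOf_eq, fixed_iff] at hmem
    exact hmem

lemma prog_compTime : (prog β p hβ hp).HasCompTime 2 :=
  ⟨fun _ => haltTime_eq.le, ⟨fun _ => false, haltTime_eq⟩⟩

end BNLcmp
namespace BNLcmp
open BForm

/-! ### Size bounds -/

lemma size_eForm_le (β p i : ℕ) : (eForm β p i).size ≤ 7 * β + 2 := by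
  have h := size_bigOr_le ((List.range β).map fun d =>
    .and (.var (xdI β p i d)) (.var (ydI β p i d))) 3 ?_
  · simpa [eForm] using h
  · intro φ hφ
    simp only [List.mem_map, List.mem_range] at hφ
    obtain ⟨d, _, rfl⟩ := hφ
    simp [size]

lemma size_gForm_le (β p i : ℕ) : (gForm β p i).size ≤ 7 * (β * β) + 2 := by
  unfold gForm
  have h := size_bigOr_le ((gtPairs β).map fun q =>
    .and (.var (xdI β p i q.1)) (.var (ydI β p i q.2))) 3 ?_
  · have hlen := length_gtPairs_le β
    simp only [List.length_map] at h
    omega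
  · intro φ hφ
    simp only [List.mem_map] at hφ
    obtain ⟨q, _, rfl⟩ := hφ
    simp [size]

lemma size_lForm_le (β p i : ℕ) : (lForm β p i).size ≤ 7 * (β * β) + 2 := by
  unfold lForm
  have h := size_bigOr_le ((gtPairs β).map fun q =>
    .and (.var (ydI β p i q.1)) (.var (xdI β p i q.2))) 3 ?_
  · have hlen := length_gtPairs_le β
    simp only [List.length_map] at h
    omega
  · intro φ hφ
    simp only [List.mem_map] at hφ
    obtain ⟨q, _, rfl⟩ := hφ
    simp [size]

lemma size_zForm_le (β p : ℕ) : (zForm β p).size ≤ 4 * p + 1 := by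
  have h := size_bigAnd_le ((List.range p).map fun i =>
    .and (.var (xdI β p i 0)) (.var (ydI β p i 0))) 3 ?_
  · simpa [zForm] using h
  · intro φ hφ
    simp only [List.mem_map, List.mem_range] at hφ
    obtain ⟨d, _, rfl⟩ := hφ
    simp [size]

lemma size_mgForm_le (β p : ℕ) : (mgForm β p).size ≤ 2 * p ^ 2 + 7 * p + 2 := by
  have h := size_bigOr_le ((List.range p).map fun i =>
    .and (.var (gVI β p i)) (bigAnd ((List.range i).map fun j => .var (eVI β p j))))
    (2 * p + 3) ?_
  · simp only [List.length_map, List.length_range] at h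
    calc (mgForm β p).size ≤ (2 * p + 3 + 4) * p + 2 := h
      _ ≤ 2 * p ^ 2 + 7 * p + 2 := by nlinarith
  · intro φ hφ
    simp only [List.mem_map, List.mem_range] at hφ
    obtain ⟨i, hi, rfl⟩ := hφ
    have hin := size_bigAnd_le ((List.range i).map fun j => .var (eVI β p j)) 1 ?_
    · simp only [List.length_map, List.length_range] at hin
      show 1 + ((bigAnd _).size) + 1 ≤ 2 * p + 3
      omega
    · intro ψ hψ
      simp only [List.mem_map, List.mem_range] at hψ
      obtain ⟨j, _, rfl⟩ := hψ
      simp [size]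

lemma size_mlForm_le (β p : ℕ) : (mlForm β p).size ≤ 2 * p ^ 2 + 7 * p + 2 := by
  have h := size_bigOr_le ((List.range p).map fun i =>
    .and (.var (lVI β p i)) (bigAnd ((List.range i).map fun j => .var (eVI β p j))))
    (2 * p + 3) ?_
  · simp only [List.length_map, List.length_range] at h
    calc (mlForm β p).size ≤ (2 * p + 3 + 4) * p + 2 := h
      _ ≤ 2 * p ^ 2 + 7 * p + 2 := by nlinarith
  · intro φ hφ
    simp only [List.mem_map, List.mem_range] at hφ
    obtain ⟨i, hi, rfl⟩ := hφ
    have hin := size_bigAnd_le ((List.range i).map fun j => .var (eVI β p j)) 1 ?_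
    · simp only [List.length_map, List.length_range] at hin
      show 1 + ((bigAnd _).size) + 1 ≤ 2 * p + 3
      omega
    · intro ψ hψ
      simp only [List.mem_map, List.mem_range] at hψ
      obtain ⟨j, _, rfl⟩ := hψ
      simp [size]

lemma size_rForm_le (β p : ℕ) : (rForm β p).size ≤ 6 * p ^ 2 + 21 * p + 38 := by
  have hmg := size_mgForm_le β p
  have hml := size_mlForm_le β p
  have hz := size_zForm_le β p
  have h := size_bigOr_le
    [ .and (.var 0) (.and (.var (nn β p)) (mgForm β p)),
      .and (.var 0) (.and (.not (.var (nn β p))) (.not (zForm β p))),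
      .and (.not (.var 0)) (.and (.not (.var (nn β p))) (mlForm β p)) ]
    (2 * p ^ 2 + 7 * p + 8) ?_
  · simp only [List.length_cons, List.length_nil] at h
    calc (rForm β p).size ≤ (2 * p ^ 2 + 7 * p + 8 + 4) * (0 + 1 + 1 + 1) + 2 := h
      _ ≤ 6 * p ^ 2 + 21 * p + 38 := by nlinarith
  · intro φ hφ
    simp only [List.mem_cons, List.not_mem_nil, or_false] at hφ
    rcases hφ with rfl | rfl | rfl
    · show 1 + (1 + (mgForm β p).size + 1) + 1 ≤ _
      omega
    · show 1 + ((1 + 1) + ((zForm β p).size + 1) + 1) + 1 ≤ _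
      omega
    · show (1 + 1) + ((1 + 1) + (mlForm β p).size + 1) + 1 ≤ _
      omega

lemma size_iter_mid (β p X : ℕ) (h1 : NN β p ≤ X) (h2 : X < NN β p + 3 * p) :
    (iterF β p X).size ≤ 7 * (β * β) + 3 := by
  have hββ : β ≤ β * β := by
    rcases Nat.eq_zero_or_pos β with h | h
    · simp [h]
    · exact Nat.le_mul_of_pos_left _ h
  unfold iterF
  split_ifs with a1 a2 a3 a4
  · omega
  · have := size_eForm_le β p (X - NN β p)
    omega
  · have := size_gForm_le β p (X - (NN β p + p))
    omega
  · have := size_lForm_le β p (X - (NN β p + 2 * p))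
    omega
  all_goals omega

lemma size_iter_hi (β p X : ℕ) (h1 : NN β p + 3 * p ≤ X) (h2 : X < o0I β p + 3) :
    (iterF β p X).size ≤ 6 * p ^ 2 + 21 * p + 39 := by
  have hr := size_rForm_le β p
  have e1 : c1I β p = NN β p + 3 * p := rfl
  have e2 : c2I β p = NN β p + 3 * p + 1 := rfl
  have e3 : o0I β p = NN β p + 3 * p + 2 := rfl
  have hX : X = c1I β p ∨ X = c2I β p ∨ X = o0I β p ∨ X = o0I β p + 1 ∨ X = o0I β p + 2 := by
    omega
  rcases hX with rfl | rfl | rfl | rfl | rfl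
  · rw [iterF_c1]; show 1 ≤ _; omega
  · rw [iterF_c2]; show 1 ≤ _; omega
  · rw [iterF_o0]; show 1 ≤ _; omega
  · rw [iterF_o1]
    show (rForm β p).size + 1 ≤ _
    omega
  · rw [iterF_o2]
    omega

lemma size_iter_tail (β p X : ℕ) (h1 : o0I β p + 3 ≤ X) :
    (iterF β p X).size ≤ 2 := by
  have hX : X = o0I β p + (X - o0I β p) ∧ 2 < X - o0I β p := by omega
  rw [hX.1, iterF_oD β p _ hX.2]
  simp [size]

lemma prog_size_le (β p : ℕ) (hβ : 2 ≤ β) (hp : 1 ≤ p) :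
    (prog β p hβ hp).size ≤ 500 * (p * β ^ 2 + p ^ 2) := by
  have hord1 : NN β p ≤ NN β p + 3 * p := by omega
  have hord2 : NN β p + 3 * p ≤ o0I β p + 3 := by
    have : o0I β p = NN β p + 3 * p + 2 := rfl
    omega
  have hord3 : o0I β p + 3 ≤ MM β p := by
    have h3 : o0I β p = NN β p + 3 * p + 2 := rfl
    have h4 : MM β p = o0I β p + 1 + β := rfl
    omega
  have hNN : NN β p = 2 + 2 * (p * β) := by unfold NN nn; ring
  have hcard : ((prog β p hβ hp).T \ (prog β p hβ hp).I).card = MM β p - NN β p := by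
    show ((Finset.range (MM β p)) \ (Finset.range (NN β p))).card = _
    rw [Finset.card_sdiff_of_subset (Finset.range_subset_range.2 (hord2.trans hord3 |>.trans' hord1))]
    simp
  have hsum : ∑ X ∈ (prog β p hβ hp).T, ((prog β p hβ hp).iter X).size
      = ∑ X ∈ Finset.range (MM β p), (iterF β p X).size := rfl
  -- split the sum
  have hsplit : ∑ X ∈ Finset.range (MM β p), (iterF β p X).size
      = (∑ X ∈ Finset.Ico 0 (NN β p), (iterF β p X).size)
        + (∑ X ∈ Finset.Ico (NN β p) (NN β p + 3 * p), (iterF β p X).size)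
        + (∑ X ∈ Finset.Ico (NN β p + 3 * p) (o0I β p + 3), (iterF β p X).size)
        + (∑ X ∈ Finset.Ico (o0I β p + 3) (MM β p), (iterF β p X).size) := by
    rw [Finset.range_eq_Ico,
      ← Finset.sum_Ico_consecutive (fun X => (iterF β p X).size) (Nat.zero_le (NN β p))
        (hord1.trans (hord2.trans hord3)),
      ← Finset.sum_Ico_consecutive (fun X => (iterF β p X).size) hord1
        (hord2.trans hord3),
      ← Finset.sum_Ico_consecutive (fun X => (iterF β p X).size) hord2 hord3]
    omega
  have hS1 : ∑ X ∈ Finset.Ico 0 (NN β p), (iterF β p X).size = NN β p := by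
    rw [Finset.sum_congr rfl (fun X hX => by
      rw [iterF_input β p X (by simpa using (Finset.mem_Ico.1 hX).2)])]
    simp [BForm.size, Nat.card_Ico]
  have hS2 : ∑ X ∈ Finset.Ico (NN β p) (NN β p + 3 * p), (iterF β p X).size
      ≤ 3 * p * (7 * (β * β) + 3) := by
    have := Finset.sum_le_card_nsmul (Finset.Ico (NN β p) (NN β p + 3 * p))
      (fun X => (iterF β p X).size) (7 * (β * β) + 3)
      (fun X hX => size_iter_mid β p X (Finset.mem_Ico.1 hX).1 (Finset.mem_Ico.1 hX).2)
    rw [Nat.card_Ico, Nat.add_sub_cancel_left] at this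
    simpa [smul_eq_mul] using this
  have hS3 : ∑ X ∈ Finset.Ico (NN β p + 3 * p) (o0I β p + 3), (iterF β p X).size
      ≤ 5 * (6 * p ^ 2 + 21 * p + 39) := by
    have := Finset.sum_le_card_nsmul (Finset.Ico (NN β p + 3 * p) (o0I β p + 3))
      (fun X => (iterF β p X).size) (6 * p ^ 2 + 21 * p + 39)
      (fun X hX => size_iter_hi β p X (Finset.mem_Ico.1 hX).1 (Finset.mem_Ico.1 hX).2)
    rw [Nat.card_Ico] at this
    have hc : o0I β p + 3 - (NN β p + 3 * p) = 5 := by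
      have : o0I β p = NN β p + 3 * p + 2 := rfl
      omega
    rw [hc] at this
    simpa [smul_eq_mul] using this
  have hS4 : ∑ X ∈ Finset.Ico (o0I β p + 3) (MM β p), (iterF β p X).size ≤ 2 * β := by
    have := Finset.sum_le_card_nsmul (Finset.Ico (o0I β p + 3) (MM β p))
      (fun X => (iterF β p X).size) 2
      (fun X hX => size_iter_tail β p X (Finset.mem_Ico.1 hX).1)
    rw [Nat.card_Ico] at this
    have hc : MM β p - (o0I β p + 3) ≤ β := by
      have h4 : MM β p = o0I β p + 1 + β := rfl
      omega
    calc ∑ X ∈ Finset.Ico (o0I β p + 3) (MM β p), (iterF β p X).size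
        ≤ (MM β p - (o0I β p + 3)) * 2 := by simpa [smul_eq_mul] using this
      _ ≤ β * 2 := Nat.mul_le_mul_right _ hc
      _ = 2 * β := by ring
  have hMMNN : MM β p - NN β p = 3 * p + 3 + β := by
    have h3 : o0I β p = NN β p + 3 * p + 2 := rfl
    have h4 : MM β p = o0I β p + 1 + β := rfl
    omega
  show ((prog β p hβ hp).T \ (prog β p hβ hp).I).card
    + ∑ X ∈ (prog β p hβ hp).T, ((prog β p hβ hp).iter X).size ≤ _
  rw [hcard, hsum, hsplit, hS1, hMMNN]
  have e1 : 2 * (p * β) ≤ 2 * (p * β ^ 2) := by nlinarith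
  have e2 : 3 * p * (7 * (β * β) + 3) = 21 * (p * β ^ 2) + 9 * p := by ring
  have e3 : 3 * β + 2 * β ≤ 3 * (p * β ^ 2) := by nlinarith
  have hpp : p ≤ p ^ 2 := by nlinarith
  have e4 : 9 * p + 3 * p + 5 * (6 * p ^ 2 + 21 * p + 39) + 5 ≤ 400 * p ^ 2 := by omega
  omega
end BNLcmp
namespace BNLcmp
open BForm

section Correctness

variable {β p : ℕ} {hβ : 2 ≤ β} {hp : 1 ≤ p} {u : ℕ → Bool}
variable {s₁ s₂ : Bool} {b₁ b₂ : Fin p → ℕ}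

/-- Sorted print predicates. -/
lemma sortPr :
    Finset.sort (Finset.image (fun d => o0I β p + d) (Finset.range (1 + β))) (· ≤ ·)
      = List.range' (o0I β p) (1 + β) := by
  refine (fun h1 h2 h3 => List.Perm.eq_of_pairwise' (r := (· ≤ ·)) h2 h3 h1) ?_ ?_ ?_
  · apply List.perm_of_nodup_nodup_toFinset_eq (Finset.sort_nodup _ _) List.nodup_range'
    ext x
    simp only [List.mem_toFinset, Finset.mem_sort, Finset.mem_image, Finset.mem_range,
      List.mem_range']
    constructor
    · rintro ⟨d, hd, rfl⟩
      exact ⟨d, hd, by omega⟩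
    · rintro ⟨i, hi, rfl⟩
      exact ⟨i, hi, by omega⟩
  · exact Finset.pairwise_sort _ _
  · exact (List.pairwise_lt_range').imp le_of_lt

lemma extD_lt₁ (hb₁ : ∀ i, b₁ i < β) : ∀ j, j < p → extD p b₁ j < β := by
  intro j hj
  unfold extD
  rw [dif_pos hj]
  exact hb₁ _

lemma extD_lt₂ (hb₂ : ∀ i, b₂ i < β) : ∀ j, j < p → extD p b₂ j < β := by
  intro j hj
  unfold extD
  rw [dif_pos hj]
  exact hb₂ _

section WithInput

variable (hb₁ : ∀ i, b₁ i < β) (hb₂ : ∀ i, b₂ i < β)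
variable (hu : Agrees u (intOneHot β p s₁ b₁ ++ intOneHot β p s₂ b₂))

include hu

lemma hlenw : (intOneHot β p s₁ b₁ ++ intOneHot β p s₂ b₂).length = 2 * nn β p := by
  rw [List.length_append, length_intOneHot, length_intOneHot]
  unfold nn
  ring

lemma hu0 : u 0 = s₁ := by
  have hl := hlenw (s₁ := s₁) (s₂ := s₂) (b₁ := b₁) (b₂ := b₂) hu
  have := hu 0 (by rw [hl]; unfold nn; omega)
  rw [this, List.getD_append _ _ _ _ (by rw [length_intOneHot]; omega)]
  exact getD_intOneHot_sign β p s₁ b₁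

lemma hun : u (nn β p) = s₂ := by
  have hl := hlenw (s₁ := s₁) (s₂ := s₂) (b₁ := b₁) (b₂ := b₂) hu
  have := hu (nn β p) (by rw [hl]; unfold nn; omega)
  rw [this, List.getD_append_right _ _ _ _ (by rw [length_intOneHot]; unfold nn; omega)]
  rw [length_intOneHot, show nn β p - (1 + p * β) = 0 from by unfold nn; omega]
  exact getD_intOneHot_sign β p s₂ b₂

lemma hux (i : Fin p) (d : ℕ) (hd : d < β) :
    u (xdI β p i.val d) = decide (d = b₁ i) := by
  have hl := hlenw (s₁ := s₁) (s₂ := s₂) (b₁ := b₁) (b₂ := b₂) hu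
  have hidx : xdI β p i.val d < nn β p := xdI_lt β p i.val d i.isLt hd
  have := hu (xdI β p i.val d) (by rw [hl]; omega)
  rw [this, List.getD_append _ _ _ _ (by rw [length_intOneHot]; unfold nn at hidx; omega)]
  exact getD_intOneHot_digit β p s₁ b₁ i d hd

lemma huy (i : Fin p) (d : ℕ) (hd : d < β) :
    u (ydI β p i.val d) = decide (d = b₂ i) := by
  have hl := hlenw (s₁ := s₁) (s₂ := s₂) (b₁ := b₁) (b₂ := b₂) hu
  have hidx : xdI β p i.val d < nn β p := xdI_lt β p i.val d i.isLt hd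
  have hy : ydI β p i.val d = nn β p + xdI β p i.val d := rfl
  have := hu (ydI β p i.val d) (by rw [hl, hy]; omega)
  rw [this, hy, List.getD_append_right _ _ _ _ (by rw [length_intOneHot]; unfold nn; omega)]
  rw [length_intOneHot, show nn β p + xdI β p i.val d - (1 + p * β) = xdI β p i.val d
    from by unfold nn; omega]
  exact getD_intOneHot_digit β p s₂ b₂ i d hd

include hb₁ in
lemma hEval (i : Fin p) :
    (prog β p hβ hp).conf u 1 (eVI β p i.val) = decide (b₁ i = b₂ i) := by
  have h1 : (prog β p hβ hp).conf u 1 (eVI β p i.val) = (eForm β p i.val).eval u := by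
    rw [show (1 : ℕ) = 0 + 1 from rfl, conf_succ, iterF_e β p i.val i.isLt]
    exact eval_congr _ fun y hy =>
      conf_input 0 (Finset.mem_range.1 (vars_eForm β p i.val i.isLt hy))
  rw [h1]
  unfold eForm
  rw [Bool.eq_iff_iff, eval_bigOr, List.any_eq_true, decide_eq_true_eq]
  constructor
  · rintro ⟨φ, hφ, hev⟩
    simp only [List.mem_map, List.mem_range] at hφ
    obtain ⟨d, hd, rfl⟩ := hφ
    have h2 : (u (xdI β p i.val d) && u (ydI β p i.val d)) = true := hev
    rw [hux hu i d hd, huy hu i d hd] at h2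
    simp only [Bool.and_eq_true, decide_eq_true_eq] at h2
    omega
  · intro h
    refine ⟨_, List.mem_map.2 ⟨b₁ i, List.mem_range.2 (hb₁ i), rfl⟩, ?_⟩
    show (u (xdI β p i.val (b₁ i)) && u (ydI β p i.val (b₁ i))) = true
    rw [hux hu i _ (hb₁ i), huy hu i _ (hb₁ i)]
    simp [h]

include hb₁ hb₂ in
lemma hGval (i : Fin p) :
    (prog β p hβ hp).conf u 1 (gVI β p i.val) = decide (b₂ i < b₁ i) := by
  have h1 : (prog β p hβ hp).conf u 1 (gVI β p i.val) = (gForm β p i.val).eval u := by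
    rw [show (1 : ℕ) = 0 + 1 from rfl, conf_succ, iterF_g β p i.val i.isLt]
    exact eval_congr _ fun y hy =>
      conf_input 0 (Finset.mem_range.1 (vars_gForm β p i.val i.isLt hy))
  rw [h1]
  unfold gForm
  rw [Bool.eq_iff_iff, eval_bigOr, List.any_eq_true, decide_eq_true_eq]
  constructor
  · rintro ⟨φ, hφ, hev⟩
    simp only [List.mem_map] at hφ
    obtain ⟨q, hq, rfl⟩ := hφ
    obtain ⟨hq1, hq2⟩ := (mem_gtPairs β q).1 hq
    have h2 : (u (xdI β p i.val q.1) && u (ydI β p i.val q.2)) = true := hev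
    rw [hux hu i q.1 hq1, huy hu i q.2 (by omega)] at h2
    simp only [Bool.and_eq_true, decide_eq_true_eq] at h2
    omega
  · intro h
    refine ⟨_, List.mem_map.2 ⟨(b₁ i, b₂ i), (mem_gtPairs β _).2 ⟨hb₁ i, h⟩, rfl⟩, ?_⟩
    show (u (xdI β p i.val (b₁ i)) && u (ydI β p i.val (b₂ i))) = true
    rw [hux hu i _ (hb₁ i), huy hu i _ (hb₂ i)]
    simp

include hb₁ hb₂ in
lemma hLval (i : Fin p) :
    (prog β p hβ hp).conf u 1 (lVI β p i.val) = decide (b₁ i < b₂ i) := by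
  have h1 : (prog β p hβ hp).conf u 1 (lVI β p i.val) = (lForm β p i.val).eval u := by
    rw [show (1 : ℕ) = 0 + 1 from rfl, conf_succ, iterF_l β p i.val i.isLt]
    exact eval_congr _ fun y hy =>
      conf_input 0 (Finset.mem_range.1 (vars_lForm β p i.val i.isLt hy))
  rw [h1]
  unfold lForm
  rw [Bool.eq_iff_iff, eval_bigOr, List.any_eq_true, decide_eq_true_eq]
  constructor
  · rintro ⟨φ, hφ, hev⟩
    simp only [List.mem_map] at hφ
    obtain ⟨q, hq, rfl⟩ := hφ
    obtain ⟨hq1, hq2⟩ := (mem_gtPairs β q).1 hq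
    have h2 : (u (ydI β p i.val q.1) && u (xdI β p i.val q.2)) = true := hev
    rw [huy hu i q.1 hq1, hux hu i q.2 (by omega)] at h2
    simp only [Bool.and_eq_true, decide_eq_true_eq] at h2
    omega
  · intro h
    refine ⟨_, List.mem_map.2 ⟨(b₂ i, b₁ i), (mem_gtPairs β _).2 ⟨hb₂ i, h⟩, rfl⟩, ?_⟩
    show (u (ydI β p i.val (b₂ i)) && u (xdI β p i.val (b₁ i))) = true
    rw [huy hu i _ (hb₂ i), hux hu i _ (hb₁ i)]
    simp

lemma hZval :
    (zForm β p).eval ((prog β p hβ hp).conf u 1)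
      = decide ((∀ j, j < p → extD p b₁ j = 0) ∧ (∀ j, j < p → extD p b₂ j = 0)) := by
  have h1 : (zForm β p).eval ((prog β p hβ hp).conf u 1) = (zForm β p).eval u :=
    eval_congr _ fun y hy =>
      conf_input 1 (Finset.mem_range.1 (vars_zForm β p (by omega) hy))
  rw [h1]
  unfold zForm
  rw [Bool.eq_iff_iff, eval_bigAnd, List.all_eq_true, decide_eq_true_eq]
  constructor
  · intro h
    constructor <;> intro j hj <;>
      [have := h _ (List.mem_map.2 ⟨j, List.mem_range.2 hj, rfl⟩);
       have := h _ (List.mem_map.2 ⟨j, List.mem_range.2 hj, rfl⟩)] <;>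
    · have h2 : (u (xdI β p j 0) && u (ydI β p j 0)) = true := this
      rw [hux hu ⟨j, hj⟩ 0 (by omega), huy hu ⟨j, hj⟩ 0 (by omega)] at h2
      simp only [Bool.and_eq_true, decide_eq_true_eq] at h2
      unfold extD
      rw [dif_pos hj]
      omega
  · rintro ⟨ha, hb⟩ φ hφ
    simp only [List.mem_map, List.mem_range] at hφ
    obtain ⟨j, hj, rfl⟩ := hφ
    have ha' := ha j hj
    have hb' := hb j hj
    unfold extD at ha' hb'
    rw [dif_pos hj] at ha' hb'
    show (u (xdI β p j 0) && u (ydI β p j 0)) = true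
    rw [hux hu ⟨j, hj⟩ 0 (by omega), huy hu ⟨j, hj⟩ 0 (by omega)]
    simp [ha', hb']

include hb₁ hb₂ in
lemma hMGval :
    (mgForm β p).eval ((prog β p hβ hp).conf u 1)
      = decide (mag β p (extD p b₂) < mag β p (extD p b₁)) := by
  unfold mgForm
  rw [Bool.eq_iff_iff, eval_bigOr, List.any_eq_true, decide_eq_true_eq,
    mag_lt_iff β p hβ _ _ (extD_lt₂ hb₂) (extD_lt₁ hb₁)]
  constructor
  · rintro ⟨φ, hφ, hev⟩
    simp only [List.mem_map, List.mem_range] at hφ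
    obtain ⟨i, hi, rfl⟩ := hφ
    have h2 : ((prog β p hβ hp).conf u 1 (gVI β p i)
        && (bigAnd ((List.range i).map fun j => BForm.var (eVI β p j))).eval
          ((prog β p hβ hp).conf u 1)) = true := hev
    rw [Bool.and_eq_true] at h2
    have hg := h2.1
    rw [hGval hb₁ hb₂ hu ⟨i, hi⟩] at hg
    simp only [decide_eq_true_eq] at hg
    refine ⟨i, hi, ?_, ?_⟩
    · unfold extD
      rw [dif_pos hi, dif_pos hi]
      exact hg
    · intro j hj
      have hjp : j < p := by omega
      have := h2.2
      rw [eval_bigAnd, List.all_eq_true] at this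
      have h3 := this _ (List.mem_map.2 ⟨j, List.mem_range.2 hj, rfl⟩)
      have h4 : (prog β p hβ hp).conf u 1 (eVI β p j) = true := h3
      rw [hEval hb₁ hu ⟨j, hjp⟩] at h4
      simp only [decide_eq_true_eq] at h4
      unfold extD
      rw [dif_pos hjp, dif_pos hjp]
      omega
  · rintro ⟨i, hi, hlt, hpre⟩
    refine ⟨_, List.mem_map.2 ⟨i, List.mem_range.2 hi, rfl⟩, ?_⟩
    show ((prog β p hβ hp).conf u 1 (gVI β p i)
      && (bigAnd ((List.range i).map fun j => BForm.var (eVI β p j))).eval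
        ((prog β p hβ hp).conf u 1)) = true
    rw [Bool.and_eq_true]
    constructor
    · rw [hGval hb₁ hb₂ hu ⟨i, hi⟩]
      unfold extD at hlt
      rw [dif_pos hi, dif_pos hi] at hlt
      simpa using hlt
    · rw [eval_bigAnd, List.all_eq_true]
      intro φ hφ
      simp only [List.mem_map, List.mem_range] at hφ
      obtain ⟨j, hj, rfl⟩ := hφ
      have hjp : j < p := by omega
      show (prog β p hβ hp).conf u 1 (eVI β p j) = true
      rw [hEval hb₁ hu ⟨j, hjp⟩]
      have := hpre j hj
      unfold extD at this
      rw [dif_pos hjp, dif_pos hjp] at this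
      simpa using this.symm

include hb₁ hb₂ in
lemma hMLval :
    (mlForm β p).eval ((prog β p hβ hp).conf u 1)
      = decide (mag β p (extD p b₁) < mag β p (extD p b₂)) := by
  unfold mlForm
  rw [Bool.eq_iff_iff, eval_bigOr, List.any_eq_true, decide_eq_true_eq,
    mag_lt_iff β p hβ _ _ (extD_lt₁ hb₁) (extD_lt₂ hb₂)]
  constructor
  · rintro ⟨φ, hφ, hev⟩
    simp only [List.mem_map, List.mem_range] at hφ
    obtain ⟨i, hi, rfl⟩ := hφ
    have h2 : ((prog β p hβ hp).conf u 1 (lVI β p i)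
        && (bigAnd ((List.range i).map fun j => BForm.var (eVI β p j))).eval
          ((prog β p hβ hp).conf u 1)) = true := hev
    rw [Bool.and_eq_true] at h2
    have hg := h2.1
    rw [hLval hb₁ hb₂ hu ⟨i, hi⟩] at hg
    simp only [decide_eq_true_eq] at hg
    refine ⟨i, hi, ?_, ?_⟩
    · unfold extD
      rw [dif_pos hi, dif_pos hi]
      exact hg
    · intro j hj
      have hjp : j < p := by omega
      have := h2.2
      rw [eval_bigAnd, List.all_eq_true] at this
      have h3 := this _ (List.mem_map.2 ⟨j, List.mem_range.2 hj, rfl⟩)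
      have h4 : (prog β p hβ hp).conf u 1 (eVI β p j) = true := h3
      rw [hEval hb₁ hu ⟨j, hjp⟩] at h4
      simp only [decide_eq_true_eq] at h4
      unfold extD
      rw [dif_pos hjp, dif_pos hjp]
      omega
  · rintro ⟨i, hi, hlt, hpre⟩
    refine ⟨_, List.mem_map.2 ⟨i, List.mem_range.2 hi, rfl⟩, ?_⟩
    show ((prog β p hβ hp).conf u 1 (lVI β p i)
      && (bigAnd ((List.range i).map fun j => BForm.var (eVI β p j))).eval
        ((prog β p hβ hp).conf u 1)) = true
    rw [Bool.and_eq_true]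
    constructor
    · rw [hLval hb₁ hb₂ hu ⟨i, hi⟩]
      unfold extD at hlt
      rw [dif_pos hi, dif_pos hi] at hlt
      simpa using hlt
    · rw [eval_bigAnd, List.all_eq_true]
      intro φ hφ
      simp only [List.mem_map, List.mem_range] at hφ
      obtain ⟨j, hj, rfl⟩ := hφ
      have hjp : j < p := by omega
      show (prog β p hβ hp).conf u 1 (eVI β p j) = true
      rw [hEval hb₁ hu ⟨j, hjp⟩]
      have := hpre j hj
      unfold extD at this
      rw [dif_pos hjp, dif_pos hjp] at this
      simpa using this

include hb₁ hb₂ in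
lemma hRval :
    (rForm β p).eval ((prog β p hβ hp).conf u 1)
      = decide (intVal β p s₂ b₂ < intVal β p s₁ b₁) := by
  have hc0 : (prog β p hβ hp).conf u 1 0 = s₁ := by
    rw [conf_input 1 (show 0 < NN β p from by unfold NN nn; omega)]
    exact hu0 hu
  have hcn : (prog β p hβ hp).conf u 1 (nn β p) = s₂ := by
    rw [conf_input 1 (show nn β p < NN β p from by unfold NN nn; omega)]
    exact hun hu
  set g := (prog β p hβ hp).conf u 1 with hg
  have e1 : (BForm.and (.var 0) (.and (.var (nn β p)) (mgForm β p))).eval g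
      = (g 0 && (g (nn β p) && (mgForm β p).eval g)) := rfl
  have e2 : (BForm.and (.var 0) (.and (.not (.var (nn β p))) (.not (zForm β p)))).eval g
      = (g 0 && (!g (nn β p) && !(zForm β p).eval g)) := rfl
  have e3 : (BForm.and (.not (.var 0)) (.and (.not (.var (nn β p))) (mlForm β p))).eval g
      = (!g 0 && (!g (nn β p) && (mlForm β p).eval g)) := rfl
  unfold rForm
  rw [eval_bigOr]
  simp only [List.any_cons, List.any_nil, Bool.or_false]
  rw [e1, e2, e3, hc0, hcn, hMGval hb₁ hb₂ hu, hMLval hb₁ hb₂ hu, hZval hu]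
  have hm₁ := mag_eq_zero_iff β p (by omega) (extD p b₁)
  have hm₂ := mag_eq_zero_iff β p (by omega) (extD p b₂)
  rw [Bool.eq_iff_iff]
  cases s₁ <;> cases s₂ <;>
    simp only [Bool.true_and, Bool.false_and, Bool.not_true, Bool.not_false, Bool.or_false,
      Bool.false_or, Bool.and_eq_true, Bool.not_eq_true', decide_eq_false_iff_not,
      decide_eq_true_eq, Bool.or_eq_true] <;>
    rw [intVal_eq β p _ b₁, intVal_eq β p _ b₂]
  · -- s₁ = false, s₂ = false
    simp only [cond_false]
    omega
  · -- s₁ = false, s₂ = true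
    simp only [cond_false, cond_true]
    constructor
    · rintro ⟨⟨⟩, _⟩
    · intro h
      exfalso
      omega
  · -- s₁ = true, s₂ = false
    simp only [cond_true, cond_false]
    rw [← hm₁, ← hm₂]
    omega
  · -- s₁ = true, s₂ = true
    simp only [cond_true]
    omega

end WithInput

end Correctness

end BNLcmp

namespace BNLcmp
open BForm

lemma prog_output (β p : ℕ) (hβ : 2 ≤ β) (hp : 1 ≤ p) (s₁ s₂ : Bool) (b₁ b₂ : Fin p → ℕ)
    (hb₁ : ∀ i, b₁ i < β) (hb₂ : ∀ i, b₂ i < β) (u : ℕ → Bool)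
    (hu : Agrees u (intOneHot β p s₁ b₁ ++ intOneHot β p s₂ b₂)) :
    (prog β p hβ hp).output u
      = intOneHot β 1 true
          (fun _ => if intVal β p s₂ b₂ < intVal β p s₁ b₁ then 1 else 0) := by
  have hR := hRval hb₁ hb₂ hu (hβ := hβ) (hp := hp)
  unfold BNL.output
  rw [haltTime_eq]
  show List.map ((prog β p hβ hp).conf u 2)
      (Finset.sort (Finset.image (fun d => o0I β p + d) (Finset.range (1 + β))) (· ≤ ·)) = _
  rw [sortPr, show 1 + β = β + 1 from by omega, List.range'_succ, List.map_cons]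
  have hc0 : (prog β p hβ hp).conf u 2 (o0I β p) = true := conf_o0_succ 1
  rw [hc0]
  have hrhs : intOneHot β 1 true
      (fun _ => if intVal β p s₂ b₂ < intVal β p s₁ b₁ then 1 else 0)
      = true :: digitOneHot β (if intVal β p s₂ b₂ < intVal β p s₁ b₁ then 1 else 0) := by
    unfold intOneHot
    simp
  rw [hrhs]
  congr 1
  apply List.ext_getElem
  · simp [digitOneHot, List.length_range']
  · intro d h1 h2
    rw [List.getElem_map, List.getElem_range']
    have hidx : o0I β p + 1 + 1 * d = o0I β p + (1 + d) := by omega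
    rw [hidx]
    have hd : d < β := by simpa [digitOneHot] using h2
    have hdig : (digitOneHot β (if intVal β p s₂ b₂ < intVal β p s₁ b₁ then 1 else 0))[d]
        = decide (d = (if intVal β p s₂ b₂ < intVal β p s₁ b₁ then 1 else 0)) := by
      simp [digitOneHot, List.getElem_ofFn]
    rw [hdig]
    match d with
    | 0 =>
        have := conf_o1 (hβ := hβ) (hp := hp) (u := u) 0
        rw [show o0I β p + (1 + 0) = o0I β p + 1 from by omega, this, hR]
        by_cases hlt : intVal β p s₂ b₂ < intVal β p s₁ b₁ <;> simp [hlt]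
    | 1 =>
        have := conf_o2 (hβ := hβ) (hp := hp) (u := u) 0
        rw [show o0I β p + (1 + 1) = o0I β p + 2 from by omega, this, hR]
        by_cases hlt : intVal β p s₂ b₂ < intVal β p s₁ b₁ <;> simp [hlt]
    | (d + 2) =>
        have := conf_oD_succ (hβ := hβ) (hp := hp) (u := u) 1 (1 + (d + 2)) (by omega)
        rw [show (2 : ℕ) = 1 + 1 from rfl] at this
        rw [this]
        by_cases hlt : intVal β p s₂ b₂ < intVal β p s₁ b₁ <;> simp [hlt]

end BNLcmp

/-- Comparison of two numbers in `Z(p,β)` can be simulated by a halting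
BNL-program of size at most `C·(p·β² + p²)` and computation time `2`: the output is the
one-hot representation of `+1 ∈ Z(1,β)` if the first number is strictly greater than the
second, and of `+0` otherwise. -/
theorem integer_comparison_bnl :
    ∃ C : ℕ, ∀ β p : ℕ, 2 ≤ β → 1 ≤ p → ∃ Λ : BNL,
      Λ.Halting ∧ Λ.size ≤ C * (p * β ^ 2 + p ^ 2) ∧ Λ.HasCompTime 2 ∧
      Λ.I.card = 2 * (1 + p * β) ∧
      ∀ (s₁ s₂ : Bool) (b₁ b₂ : Fin p → ℕ), (∀ i, b₁ i < β) → (∀ i, b₂ i < β) →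
        ∀ u : ℕ → Bool, Agrees u (intOneHot β p s₁ b₁ ++ intOneHot β p s₂ b₂) →
          Λ.output u =
            intOneHot β 1 true
              (fun _ => if intVal β p s₂ b₂ < intVal β p s₁ b₁ then 1 else 0) := by
  refine ⟨500, fun β p hβ hp => ⟨BNLcmp.prog β p hβ hp, BNLcmp.prog_halting,
    BNLcmp.prog_size_le β p hβ hp, BNLcmp.prog_compTime, ?_, ?_⟩⟩
  · show (Finset.range (BNLcmp.NN β p)).card = 2 * (1 + p * β)
    rw [Finset.card_range]
    rfl
  · intro s₁ s₂ b₁ b₂ hb₁ hb₂ u hu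
    exact BNLcmp.prog_output β p hβ hp s₁ s₂ b₁ b₂ hb₁ hb₂ u hu
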